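/- Let L be a real number and let τ ∈ ℂ satisfy Im τ > 0 and Im τ > L/2. If v₁, v₂ ∈ ℤ[i] are Gaussian integers (regarded as complex numbers) satisfying the self-duality relation v₁·conj(τ) = v₂ and the tadpole bound ‖v‖²_τ := |v₁|²·Im τ + |v₂ − v₁·Re τ|²/Im τ ≤ L, then v₁ = 0 and v₂ = 0. (No non-trivial self-dual flux satisfies the tadpole bound beyond the critical value of Im τ; paper §3.1.) -/

import Mathlib

/-- Beyond the critical value of `Im τ` determined by the tadpole bound `L`, the only
Gaussian-integer flux `(v₁, v₂)` on the rigid `Y₃ × T²` compactification that satisfies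
both the self-duality relation `v₁ * conj τ = v₂` and the tadpole bound
`|v₁|² Im τ + |v₂ - v₁ Re τ|² / Im τ ≤ L` is the trivial one. -/
theorem tadpole_selfdual_trivial_beyond_critical
    (L : ℝ) (τ : ℂ) (hτ : 0 < τ.im) (hcrit : L / 2 < τ.im)
    (v₁ v₂ : GaussianInt)
    (hsd : (v₁ : ℂ) * (starRingEnd ℂ) τ = (v₂ : ℂ))
    (htad : ‖(v₁ : ℂ)‖ ^ 2 * τ.im
        + ‖(v₂ : ℂ) - (v₁ : ℂ) * (τ.re : ℂ)‖ ^ 2 / τ.im ≤ L) :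
    v₁ = 0 ∧ v₂ = 0 := by
  have hdiff : (v₂ : ℂ) - (v₁ : ℂ) * (τ.re : ℂ)
      = (v₁ : ℂ) * ((starRingEnd ℂ) τ - (τ.re : ℂ)) := by
    rw [mul_sub, hsd]
  have habs : ‖(starRingEnd ℂ) τ - (τ.re : ℂ)‖ = τ.im := by
    have : (starRingEnd ℂ) τ - (τ.re : ℂ) = Complex.mk 0 (-τ.im) := by
      apply Complex.ext <;> simp
    rw [this]
    simp [Complex.norm_def, Complex.normSq_mk, abs_of_pos hτ,
      Real.sqrt_eq_iff_eq_sq, sq]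
    ring_nf
    rw [Real.sqrt_sq hτ.le]
  have key : 2 * ‖(v₁ : ℂ)‖ ^ 2 * τ.im ≤ L := by
    have : ‖(v₂ : ℂ) - (v₁ : ℂ) * (τ.re : ℂ)‖ ^ 2 / τ.im
        = ‖(v₁ : ℂ)‖ ^ 2 * τ.im := by
      rw [hdiff, norm_mul, habs, mul_pow]
      field_simp
    rw [this] at htad
    linarith
  have hlt : ‖(v₁ : ℂ)‖ ^ 2 < 1 := by
    nlinarith
  have hv₁ : v₁ = 0 := by
    have hn : ((v₁.norm : ℝ)) < 1 := by
      rw [GaussianInt.intCast_real_norm, ← Complex.sq_norm]; exact hlt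
    have : v₁.norm < 1 := by exact_mod_cast hn
    have h0 : v₁.norm = 0 := le_antisymm (by omega) (GaussianInt.norm_nonneg _)
    exact GaussianInt.norm_eq_zero.mp h0
  refine ⟨hv₁, ?_⟩
  have : (v₂ : ℂ) = 0 := by rw [← hsd, hv₁]; simp
  exact GaussianInt.toComplex_eq_zero.mp this
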